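/- Under Assumptions (B1)–(B4), fix a noise path Z with Hölder constant Λ, let Y be the corresponding pathwise solution and, for each N with c3·Δ_N < 1, let Ŷ_N be the corresponding drift-implicit Euler scheme. Then for every r ≥ 1 there exists a constant 𝒞 > 0, independent of N, such that for every N with c3·Δ_N < 1: max_{n=0,…,N} |1/(Y(t_n) − φ(t_n)) − 1/(Ŷ_N(t_n) − φ(t_n))|^r ≤ 𝒞·Δ_N^{λr} and max_{n=0,…,N} |1/(ψ(t_n) − Y(t_n)) − 1/(ψ(t_n) − Ŷ_N(t_n))|^r ≤ 𝒞·Δ_N^{λr}. -/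

import Mathlib

open MeasureTheory

open Set

lemma holder_contOn (f : ℝ → ℝ) (K lam T : ℝ) (hlam : 0 < lam)
    (h : ∀ s ∈ Icc (0:ℝ) T, ∀ t ∈ Icc (0:ℝ) T, |f t - f s| ≤ K * |t - s| ^ lam) :
    ContinuousOn f (Icc (0:ℝ) T) := by
  intro s hs
  have h3 : ContinuousAt (fun t : ℝ => |t - s|) s :=
    ((continuous_id.sub continuous_const).abs).continuousAt
  have h1 : ContinuousAt (fun t : ℝ => K * |t - s| ^ lam) s :=
    (h3.rpow_const (Or.inr hlam.le)).const_mul K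
  have h0 : K * |s - s| ^ lam = 0 := by
    simp [Real.zero_rpow hlam.ne']
  have htend : Filter.Tendsto (fun t : ℝ => K * |t - s| ^ lam)
      (nhdsWithin s (Icc 0 T)) (nhds 0) := by
    have := h1.tendsto
    rw [h0] at this
    exact this.mono_left nhdsWithin_le_nhds
  have hsq : Filter.Tendsto (fun t => f t - f s) (nhdsWithin s (Icc 0 T)) (nhds 0) := by
    apply squeeze_zero_norm' _ htend
    filter_upwards [self_mem_nhdsWithin] with t ht
    simpa [Real.norm_eq_abs] using h s hs t ht
  have := hsq.add_const (f s)
  exact (by simpa using this : Filter.Tendsto f (nhdsWithin s (Icc 0 T)) (nhds (f s)))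

lemma mvt_slope (g g' : ℝ → ℝ) (lo hi a b : ℝ) (ha : a ∈ Ioo lo hi) (hb : b ∈ Ioo lo hi)
    (hder : ∀ y ∈ Ioo lo hi, HasDerivAt g (g' y) y) :
    ∃ ξ ∈ Ioo lo hi, g b - g a = g' ξ * (b - a) := by
  rcases lt_trichotomy a b with hab | hab | hab
  · have hsub : Icc a b ⊆ Ioo lo hi := fun x hx =>
      ⟨lt_of_lt_of_le ha.1 hx.1, lt_of_le_of_lt hx.2 hb.2⟩
    obtain ⟨ξ, hξ, heq⟩ := exists_hasDerivAt_eq_slope g g' hab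
      (fun x hx => (hder x (hsub hx)).continuousAt.continuousWithinAt)
      (fun x hx => hder x (hsub (Ioo_subset_Icc_self hx)))
    refine ⟨ξ, hsub (Ioo_subset_Icc_self hξ), ?_⟩
    have hne : b - a ≠ 0 := sub_ne_zero.2 hab.ne'
    rw [eq_div_iff hne] at heq
    linarith [heq]
  · exact ⟨a, ha, by simp [hab]⟩
  · have hsub : Icc b a ⊆ Ioo lo hi := fun x hx =>
      ⟨lt_of_lt_of_le hb.1 hx.1, lt_of_le_of_lt hx.2 ha.2⟩
    obtain ⟨ξ, hξ, heq⟩ := exists_hasDerivAt_eq_slope g g' hab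
      (fun x hx => (hder x (hsub hx)).continuousAt.continuousWithinAt)
      (fun x hx => hder x (hsub (Ioo_subset_Icc_self hx)))
    refine ⟨ξ, hsub (Ioo_subset_Icc_self hξ), ?_⟩
    have hne : a - b ≠ 0 := sub_ne_zero.2 hab.ne'
    rw [eq_div_iff hne] at heq
    nlinarith [heq]

lemma exp_neg_two_le (x : ℝ) (h0 : 0 ≤ x) (h1 : x ≤ 1/2) : Real.exp (-(2*x)) ≤ 1 - x := by
  have h2 : 1 + 2*x ≤ Real.exp (2*x) := by
    have := Real.add_one_le_exp (2*x); linarith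
  have h3 : 0 < 1 + 2*x := by linarith
  have h4 : Real.exp (-(2*x)) = 1 / Real.exp (2*x) := by
    rw [Real.exp_neg]; ring
  rw [h4]
  have h5 : 1 / Real.exp (2*x) ≤ 1 / (1+2*x) :=
    one_div_le_one_div_of_le h3 h2
  have h6 : 1 / (1+2*x) ≤ 1 - x := by
    rw [div_le_iff₀ h3]; nlinarith
  linarith


set_option maxHeartbeats 1000000 in
theorem stmt_12
    (T lam : ℝ) (hT : 0 < T) (hlam : lam ∈ Set.Ioo (0:ℝ) 1)
    (phi psi : ℝ → ℝ) (K : ℝ) (hK : 0 < K)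
    (hphiH : ∀ s ∈ Set.Icc (0:ℝ) T, ∀ t ∈ Set.Icc (0:ℝ) T, |phi t - phi s| ≤ K * |t - s| ^ lam)
    (hpsiH : ∀ s ∈ Set.Icc (0:ℝ) T, ∀ t ∈ Set.Icc (0:ℝ) T, |psi t - psi s| ≤ K * |t - s| ^ lam)
    (hphipsi : ∀ t ∈ Set.Icc (0:ℝ) T, phi t < psi t)
    (b : ℝ → ℝ → ℝ) (c1 p c2 ystar gam : ℝ)
    (hc1 : 0 < c1) (hp : 1 < p) (hc2 : 0 < c2) (hystar : 0 < ystar)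
    (hgam : 1 / lam - 1 < gam)
    (hB2cont : ContinuousOn (fun q : ℝ × ℝ => b q.1 q.2)
      {q : ℝ × ℝ | q.1 ∈ Set.Icc (0:ℝ) T ∧ phi q.1 < q.2 ∧ q.2 < psi q.1})
    (hB2lip : ∀ ε : ℝ, 0 < ε → ε < min 1 ((⨆ t : Set.Icc (0:ℝ) T, |psi t.1 - phi t.1|) / 2) →
      ∀ t1 ∈ Set.Icc (0:ℝ) T, ∀ t2 ∈ Set.Icc (0:ℝ) T, ∀ y1 y2 : ℝ,
        phi t1 + ε < y1 → y1 < psi t1 - ε → phi t2 + ε < y2 → y2 < psi t2 - ε →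
        |b t1 y1 - b t2 y2| ≤ c1 / ε ^ p * (|y1 - y2| + |t1 - t2| ^ lam))
    (hB3low : ∀ t ∈ Set.Icc (0:ℝ) T, ∀ y : ℝ, phi t < y → y ≤ phi t + ystar → y < psi t →
      c2 / (y - phi t) ^ gam ≤ b t y)
    (hB3up : ∀ t ∈ Set.Icc (0:ℝ) T, ∀ y : ℝ, psi t - ystar ≤ y → y < psi t → phi t < y →
      b t y ≤ -(c2 / (psi t - y) ^ gam))
    (Y0 : ℝ) (hB1 : phi 0 < Y0 ∧ Y0 < psi 0)
    (bp : ℝ → ℝ → ℝ) (c3 : ℝ) (hc3 : 0 < c3)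
    (hB4deriv : ∀ t ∈ Set.Icc (0:ℝ) T, ∀ y : ℝ, phi t < y → y < psi t →
      HasDerivAt (fun x => b t x) (bp t y) y)
    (hB4cont : ContinuousOn (fun q : ℝ × ℝ => bp q.1 q.2)
      {q : ℝ × ℝ | q.1 ∈ Set.Icc (0:ℝ) T ∧ phi q.1 < q.2 ∧ q.2 < psi q.1})
    (hB4lt : ∀ t ∈ Set.Icc (0:ℝ) T, ∀ y : ℝ, phi t < y → y < psi t → bp t y < c3)
    (Z : ℝ → ℝ) (Lam : ℝ) (hLam : 0 < Lam) (hZ0 : Z 0 = 0)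
    (hZH : ∀ s ∈ Set.Icc (0:ℝ) T, ∀ t ∈ Set.Icc (0:ℝ) T, |Z t - Z s| ≤ Lam * |t - s| ^ lam)
    (Y : ℝ → ℝ) (hYc : ContinuousOn Y (Set.Icc (0:ℝ) T))
    (hYsand : ∀ t ∈ Set.Icc (0:ℝ) T, phi t < Y t ∧ Y t < psi t)
    (hYeq : ∀ t ∈ Set.Icc (0:ℝ) T, Y t = Y0 + (∫ s in (0:ℝ)..t, b s (Y s)) + Z t)
    (Yh : ℕ → ℕ → ℝ) (hYh0 : ∀ N : ℕ, Yh N 0 = Y0)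
    (hYhrec : ∀ N : ℕ, 0 < N → c3 * (T / (N : ℝ)) < 1 → ∀ k : ℕ, k < N →
      phi (((k : ℝ) + 1) * T / (N : ℝ)) < Yh N (k + 1) ∧
      Yh N (k + 1) < psi (((k : ℝ) + 1) * T / (N : ℝ)) ∧
      Yh N (k + 1) = Yh N k + b (((k : ℝ) + 1) * T / (N : ℝ)) (Yh N (k + 1)) * (T / (N : ℝ))
        + (Z (((k : ℝ) + 1) * T / (N : ℝ)) - Z ((k : ℝ) * T / (N : ℝ))))
    :
    ∀ r : ℝ, 1 ≤ r → ∃ C : ℝ, 0 < C ∧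
      ∀ N : ℕ, 0 < N → c3 * (T / (N : ℝ)) < 1 →
        ∀ n : ℕ, n ≤ N →
          |1 / (Y ((n : ℝ) * T / (N : ℝ)) - phi ((n : ℝ) * T / (N : ℝ))) - 1 / (Yh N n - phi ((n : ℝ) * T / (N : ℝ)))| ^ r
            ≤ C * (T / (N : ℝ)) ^ (lam * r) ∧
          |1 / (psi ((n : ℝ) * T / (N : ℝ)) - Y ((n : ℝ) * T / (N : ℝ))) - 1 / (psi ((n : ℝ) * T / (N : ℝ)) - Yh N n)| ^ r
            ≤ C * (T / (N : ℝ)) ^ (lam * r) := by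
  intro r hr
  obtain ⟨hlam0, hlam1⟩ := hlam
  have hT0 : (0:ℝ) ≤ T := hT.le
  have h0T : (0:ℝ) ∈ Set.Icc (0:ℝ) T := Set.left_mem_Icc.2 hT0
  have hphic := holder_contOn phi K lam T hlam0 hphiH
  have hpsic := holder_contOn psi K lam T hlam0 hpsiH
  have hY00 : Y 0 = Y0 := by
    have := hYeq 0 h0T
    simpa [hZ0] using this
  -- minimal distance of Y to the boundaries
  obtain ⟨t0, ht0, hmin⟩ := isCompact_Icc.exists_isMinOn (f := fun t => min (Y t - phi t) (psi t - Y t))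
    ⟨0, h0T⟩ ((hYc.sub hphic).inf (hpsic.sub hYc))
  rw [isMinOn_iff] at hmin
  set ε0 := min (Y t0 - phi t0) (psi t0 - Y t0) with hε0def
  have hε0 : 0 < ε0 := lt_min (sub_pos.2 (hYsand t0 ht0).1) (sub_pos.2 (hYsand t0 ht0).2)
  have hYlow : ∀ t ∈ Set.Icc (0:ℝ) T, ε0 ≤ Y t - phi t := fun t ht =>
    le_trans (hmin t ht) (min_le_left _ _)
  have hYup : ∀ t ∈ Set.Icc (0:ℝ) T, ε0 ≤ psi t - Y t := fun t ht =>
    le_trans (hmin t ht) (min_le_right _ _)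
  -- bound for the drift along the solution
  have hmapsto : Set.MapsTo (fun s => (s, Y s)) (Set.Icc (0:ℝ) T)
      {q : ℝ × ℝ | q.1 ∈ Set.Icc (0:ℝ) T ∧ phi q.1 < q.2 ∧ q.2 < psi q.1} :=
    fun s hs => ⟨hs, (hYsand s hs).1, (hYsand s hs).2⟩
  have hgc : ContinuousOn (fun s => b s (Y s)) (Set.Icc (0:ℝ) T) :=
    hB2cont.comp (continuousOn_id.prodMk hYc) hmapsto
  obtain ⟨M, hM⟩ := isCompact_Icc.exists_bound_of_continuousOn hgc
  set M' := max M 0 with hM'def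
  have hM'0 : 0 ≤ M' := le_max_right _ _
  have hM' : ∀ s ∈ Set.Icc (0:ℝ) T, |b s (Y s)| ≤ M' := fun s hs =>
    le_trans (by simpa [Real.norm_eq_abs] using hM s hs) (le_max_left _ _)
  -- integrability
  have huIcc : ∀ s ∈ Set.Icc (0:ℝ) T, ∀ t ∈ Set.Icc (0:ℝ) T, Set.uIcc s t ⊆ Set.Icc (0:ℝ) T := by
    intro s hs t ht
    rw [← Set.uIcc_of_le hT0]
    exact Set.uIcc_subset_uIcc (by rwa [Set.uIcc_of_le hT0]) (by rwa [Set.uIcc_of_le hT0])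
  have hInt : ∀ s ∈ Set.Icc (0:ℝ) T, ∀ t ∈ Set.Icc (0:ℝ) T,
      IntervalIntegrable (fun u => b u (Y u)) MeasureTheory.volume s t := fun s hs t ht =>
    (hgc.mono (huIcc s hs t ht)).intervalIntegrable
  -- increments of Y
  have hYinc : ∀ s ∈ Set.Icc (0:ℝ) T, ∀ t ∈ Set.Icc (0:ℝ) T,
      Y t - Y s = (∫ u in s..t, b u (Y u)) + (Z t - Z s) := by
    intro s hs t ht
    have h := intervalIntegral.integral_interval_sub_left (hInt 0 h0T t ht) (hInt 0 h0T s hs)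
    rw [hYeq t ht, hYeq s hs]
    linarith [h]
  -- |t - s| ≤ T on Icc
  have habsT : ∀ s ∈ Set.Icc (0:ℝ) T, ∀ t ∈ Set.Icc (0:ℝ) T, |t - s| ≤ T := by
    intro s hs t ht
    rw [abs_sub_le_iff]
    constructor <;> linarith [hs.1, hs.2, ht.1, ht.2]
  -- Hölder bound for Y
  set CY := M' * T ^ ((1:ℝ) - lam) + Lam with hCYdef
  have hCY0 : 0 < CY := by positivity
  have hYH : ∀ s ∈ Set.Icc (0:ℝ) T, ∀ t ∈ Set.Icc (0:ℝ) T, |Y t - Y s| ≤ CY * |t - s| ^ lam := by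
    intro s hs t ht
    have hi : |∫ u in s..t, b u (Y u)| ≤ M' * |t - s| := by
      have hb : ∀ x ∈ Set.uIoc s t, ‖b x (Y x)‖ ≤ M' := by
        intro x hx
        have hx' : x ∈ Set.Icc (0:ℝ) T := huIcc s hs t ht (Set.uIoc_subset_uIcc hx)
        simpa [Real.norm_eq_abs] using hM' x hx'
      have := intervalIntegral.norm_integral_le_of_norm_le_const hb
      rwa [Real.norm_eq_abs] at this
    have hsplit : |t - s| ≤ T ^ ((1:ℝ) - lam) * |t - s| ^ lam := by
      have he : |t - s| = |t - s| ^ lam * |t - s| ^ ((1:ℝ) - lam) := by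
        rw [← Real.rpow_add' (abs_nonneg _) (by norm_num)]
        norm_num
      have h2 : |t - s| ^ ((1:ℝ) - lam) ≤ T ^ ((1:ℝ) - lam) :=
        Real.rpow_le_rpow (abs_nonneg _) (habsT s hs t ht) (by linarith)
      calc |t - s| = |t - s| ^ lam * |t - s| ^ ((1:ℝ) - lam) := he
        _ ≤ |t - s| ^ lam * T ^ ((1:ℝ) - lam) := by
            apply mul_le_mul_of_nonneg_left h2 (Real.rpow_nonneg (abs_nonneg _) _)
        _ = T ^ ((1:ℝ) - lam) * |t - s| ^ lam := by ring
    have hz := hZH s hs t ht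
    have := hYinc s hs t ht
    calc |Y t - Y s| = |(∫ u in s..t, b u (Y u)) + (Z t - Z s)| := by rw [this]
      _ ≤ |∫ u in s..t, b u (Y u)| + |Z t - Z s| := abs_add_le _ _
      _ ≤ M' * |t - s| + Lam * |t - s| ^ lam := add_le_add hi hz
      _ ≤ M' * (T ^ ((1:ℝ) - lam) * |t - s| ^ lam) + Lam * |t - s| ^ lam := by
          apply add_le_add_left (mul_le_mul_of_nonneg_left hsplit hM'0)
      _ = CY * |t - s| ^ lam := by rw [hCYdef]; ring
  -- positivity of the sup
  have hSpos : 0 < (⨆ t : Set.Icc (0:ℝ) T, |psi t.1 - phi t.1|) := by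
    obtain ⟨M2, hM2⟩ := isCompact_Icc.exists_bound_of_continuousOn (hpsic.sub hphic)
    have hbdd : BddAbove (Set.range fun t : Set.Icc (0:ℝ) T => |psi t.1 - phi t.1|) := by
      refine ⟨M2, ?_⟩
      rintro x ⟨t, rfl⟩
      simpa [Real.norm_eq_abs] using hM2 t.1 t.2
    have hle : |psi 0 - phi 0| ≤ ⨆ t : Set.Icc (0:ℝ) T, |psi t.1 - phi t.1| :=
      le_ciSup hbdd ⟨0, h0T⟩
    have : 0 < |psi 0 - phi 0| := abs_pos.2 (sub_ne_zero.2 (hphipsi 0 h0T).ne')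
    linarith
  -- choice of ε
  set S := (⨆ t : Set.Icc (0:ℝ) T, |psi t.1 - phi t.1|) with hSdef
  set ε := min ε0 (min 1 (S / 2)) / 2 with hεdef
  have hmpos : 0 < min 1 (S / 2) := lt_min one_pos (by linarith)
  have hεpos : 0 < ε := by
    have := lt_min hε0 hmpos
    rw [hεdef]; linarith
  have hεlt : ε < min 1 (S / 2) := by
    have h1 : min ε0 (min 1 (S/2)) ≤ min 1 (S/2) := min_le_right _ _
    rw [hεdef]; linarith
  have hεε0 : ε < ε0 := by
    have h1 : min ε0 (min 1 (S/2)) ≤ ε0 := min_le_left _ _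
    rw [hεdef]; linarith
  have hYmid : ∀ t ∈ Set.Icc (0:ℝ) T, phi t + ε < Y t ∧ Y t < psi t - ε := by
    intro t ht
    constructor
    · linarith [hYlow t ht]
    · linarith [hYup t ht]
  set L := c1 / ε ^ p with hLdef
  have hL : 0 < L := div_pos hc1 (Real.rpow_pos_of_pos hεpos p)
  set Cρ := L * (CY + 1) with hCρdef
  have hCρ : 0 < Cρ := mul_pos hL (by linarith)
  -- the key error recursion
  have key : ∀ N : ℕ, 0 < N → c3 * (T / (N:ℝ)) < 1 → ∀ n : ℕ, n ≤ N →
      |Y ((n:ℝ) * T / (N:ℝ)) - Yh N n| * (1 - c3 * (T/(N:ℝ)))^n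
        ≤ (n:ℝ) * (Cρ * (T/(N:ℝ)) * (T/(N:ℝ)) ^ lam) := by
    intro N hN hN1
    have hNpos : (0:ℝ) < (N:ℝ) := Nat.cast_pos.2 hN
    set Δ := T / (N:ℝ) with hΔdef
    have hΔpos : 0 < Δ := div_pos hT hNpos
    have h1c3 : 0 < 1 - c3 * Δ := by linarith
    have hc3Δ : 0 < c3 * Δ := mul_pos hc3 hΔpos
    have h1c3' : 1 - c3 * Δ ≤ 1 := by linarith
    have htk : ∀ m : ℕ, m ≤ N → ((m:ℝ) * T / (N:ℝ)) ∈ Set.Icc (0:ℝ) T := by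
      intro m hm
      constructor
      · positivity
      · rw [div_le_iff₀ hNpos]
        have h2 : (m:ℝ) ≤ (N:ℝ) := Nat.cast_le.2 hm
        have h3 : (m:ℝ)*T ≤ (N:ℝ)*T := mul_le_mul_of_nonneg_right h2 hT0
        linarith
    intro n
    induction n with
    | zero =>
      intro _
      simp [hYh0 N, hY00]
    | succ k ih =>
      intro hn
      have hkN : k < N := hn
      have ihk := ih hkN.le
      obtain ⟨hφ', hψ', heq⟩ := hYhrec N hN hN1 k hkN
      set tk := (k:ℝ) * T / (N:ℝ) with htkdef
      set tk1 := ((k:ℝ) + 1) * T / (N:ℝ) with htk1def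
      have htkm : tk ∈ Set.Icc (0:ℝ) T := htk k hkN.le
      have htk1m : tk1 ∈ Set.Icc (0:ℝ) T := by
        have := htk (k+1) hn
        push_cast at this
        exact this
      have hdiff : tk1 - tk = Δ := by
        rw [htkdef, htk1def, hΔdef]; ring
      have htkle : tk ≤ tk1 := by linarith
      have hYI : Y tk1 - Y tk = (∫ u in tk..tk1, b u (Y u)) + (Z tk1 - Z tk) :=
        hYinc tk htkm tk1 htk1m
      -- the local error
      set ρ := (∫ u in tk..tk1, b u (Y u)) - Δ * b tk1 (Y tk1) with hρdef
      have hρbound : |ρ| ≤ Cρ * Δ * Δ ^ lam := by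
        have hconst : (∫ _u in tk..tk1, b tk1 (Y tk1)) = Δ * b tk1 (Y tk1) := by
          rw [intervalIntegral.integral_const, hdiff]
          simp [smul_eq_mul]
        have hsub : ρ = ∫ u in tk..tk1, (b u (Y u) - b tk1 (Y tk1)) := by
          rw [intervalIntegral.integral_sub (hInt tk htkm tk1 htk1m)
            (intervalIntegrable_const), hconst, hρdef]
        have hptwise : ∀ u ∈ Set.uIoc tk tk1, ‖b u (Y u) - b tk1 (Y tk1)‖ ≤ Cρ * Δ ^ lam := by
          intro u hu
          rw [Set.uIoc_of_le htkle] at hu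
          have hum : u ∈ Set.Icc (0:ℝ) T := ⟨le_trans htkm.1 hu.1.le, le_trans hu.2 htk1m.2⟩
          have hud : |u - tk1| ≤ Δ := by
            rw [abs_sub_le_iff]
            constructor <;> linarith [hu.1, hu.2]
          have hudl : |u - tk1| ^ lam ≤ Δ ^ lam :=
            Real.rpow_le_rpow (abs_nonneg _) hud hlam0.le
          have hlip := hB2lip ε hεpos hεlt u hum tk1 htk1m (Y u) (Y tk1)
            (hYmid u hum).1 (hYmid u hum).2 (hYmid tk1 htk1m).1 (hYmid tk1 htk1m).2
          have hYdist : |Y u - Y tk1| ≤ CY * Δ ^ lam :=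
            le_trans (hYH tk1 htk1m u hum) (mul_le_mul_of_nonneg_left hudl hCY0.le)
          rw [Real.norm_eq_abs]
          calc |b u (Y u) - b tk1 (Y tk1)| ≤ L * (|Y u - Y tk1| + |u - tk1| ^ lam) := hlip
            _ ≤ L * (CY * Δ ^ lam + Δ ^ lam) := by
                apply mul_le_mul_of_nonneg_left (add_le_add hYdist hudl) hL.le
            _ = Cρ * Δ ^ lam := by rw [hCρdef]; ring
        have := intervalIntegral.norm_integral_le_of_norm_le_const hptwise
        rw [← hsub, Real.norm_eq_abs] at this
        calc |ρ| ≤ Cρ * Δ ^ lam * |tk1 - tk| := this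
          _ = Cρ * Δ * Δ ^ lam := by rw [hdiff, abs_of_pos hΔpos]; ring
      -- mean value theorem
      have hYs1 := hYsand tk1 htk1m
      obtain ⟨ξ, hξ, hslope⟩ := mvt_slope (fun x => b tk1 x) (fun y => bp tk1 y)
        (phi tk1) (psi tk1) (Yh N (k+1)) (Y tk1) ⟨hφ', hψ'⟩ ⟨hYs1.1, hYs1.2⟩
        (fun y hy => hB4deriv tk1 htk1m y hy.1 hy.2)
      have hbpξ : bp tk1 ξ < c3 := hB4lt tk1 htk1m ξ hξ.1 hξ.2
      have hpos1 : 1 - c3 * Δ ≤ 1 - Δ * bp tk1 ξ := by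
        have h1 : Δ * bp tk1 ξ ≤ Δ * c3 := mul_le_mul_of_nonneg_left hbpξ.le hΔpos.le
        have h2 : Δ * c3 = c3 * Δ := mul_comm _ _
        linarith
      have hEk1 : (Y tk1 - Yh N (k+1)) * (1 - Δ * bp tk1 ξ) = (Y tk - Yh N k) + ρ := by
        linear_combination hYI - heq + Δ * hslope + hρdef
      have hstep : |Y tk1 - Yh N (k+1)| * (1 - c3 * Δ) ≤ |Y tk - Yh N k| + Cρ * Δ * Δ ^ lam := by
        calc |Y tk1 - Yh N (k+1)| * (1 - c3 * Δ)
            ≤ |Y tk1 - Yh N (k+1)| * (1 - Δ * bp tk1 ξ) :=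
              mul_le_mul_of_nonneg_left hpos1 (abs_nonneg _)
          _ = |(Y tk1 - Yh N (k+1)) * (1 - Δ * bp tk1 ξ)| := by
              rw [abs_mul, abs_of_pos (lt_of_lt_of_le h1c3 hpos1)]
          _ = |(Y tk - Yh N k) + ρ| := by rw [hEk1]
          _ ≤ |Y tk - Yh N k| + |ρ| := abs_add_le _ _
          _ ≤ |Y tk - Yh N k| + Cρ * Δ * Δ ^ lam := by linarith [hρbound]
      -- conclude
      have hpk : (0:ℝ) ≤ (1 - c3*Δ)^k := pow_nonneg h1c3.le k
      have hpk1 : (1 - c3*Δ)^k ≤ 1 := pow_le_one₀ h1c3.le h1c3'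
      have hterm : (0:ℝ) ≤ Cρ * Δ * Δ ^ lam := by positivity
      have goal2 : |Y tk1 - Yh N (k+1)| * (1 - c3*Δ)^(k+1)
          ≤ ((k:ℝ)+1) * (Cρ * Δ * Δ ^ lam) := by
        have e1 : |Y tk1 - Yh N (k+1)| * (1 - c3*Δ)^(k+1)
            = (|Y tk1 - Yh N (k+1)| * (1 - c3*Δ)) * (1 - c3*Δ)^k := by
          rw [pow_succ]; ring
        rw [e1]
        calc (|Y tk1 - Yh N (k+1)| * (1 - c3*Δ)) * (1 - c3*Δ)^k
            ≤ (|Y tk - Yh N k| + Cρ * Δ * Δ ^ lam) * (1 - c3*Δ)^k :=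
              mul_le_mul_of_nonneg_right hstep hpk
          _ = |Y tk - Yh N k| * (1 - c3*Δ)^k + (Cρ * Δ * Δ ^ lam) * (1 - c3*Δ)^k := by ring
          _ ≤ (k:ℝ) * (Cρ * Δ * Δ ^ lam) + (Cρ * Δ * Δ ^ lam) * 1 := by
              apply add_le_add ihk (mul_le_mul_of_nonneg_left hpk1 hterm)
          _ = ((k:ℝ)+1) * (Cρ * Δ * Δ ^ lam) := by ring
      push_cast
      exact goal2
  have htkmem : ∀ N : ℕ, 0 < N → ∀ m : ℕ, m ≤ N → ((m:ℝ) * T / (N:ℝ)) ∈ Set.Icc (0:ℝ) T := by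
    intro N hN m hm
    have hNpos : (0:ℝ) < (N:ℝ) := Nat.cast_pos.2 hN
    constructor
    · positivity
    · rw [div_le_iff₀ hNpos]
      have h2 : (m:ℝ) ≤ (N:ℝ) := Nat.cast_le.2 hm
      have h3 : (m:ℝ)*T ≤ (N:ℝ)*T := mul_le_mul_of_nonneg_right h2 hT0
      linarith
  set CE := Cρ * T * Real.exp (2*c3*T) with hCEdef
  have hCE : 0 < CE := by positivity
  have good : ∀ N : ℕ, 0 < N → c3 * (T/(N:ℝ)) ≤ 1/2 → ∀ n : ℕ, n ≤ N →
      |Y ((n:ℝ)*T/(N:ℝ)) - Yh N n| ≤ CE * (T/(N:ℝ)) ^ lam := by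
    intro N hN hhalf n hn
    have hNpos : (0:ℝ) < (N:ℝ) := Nat.cast_pos.2 hN
    set Δ := T/(N:ℝ) with hΔdef
    have hΔpos : 0 < Δ := div_pos hT hNpos
    have hN1 : c3 * Δ < 1 := lt_of_le_of_lt hhalf (by norm_num)
    have hk := key N hN hN1 n hn
    have hc3Δ0 : 0 ≤ c3 * Δ := (mul_pos hc3 hΔpos).le
    have hexp : Real.exp (-(2*(c3*Δ))) ≤ 1 - c3*Δ := exp_neg_two_le _ hc3Δ0 hhalf
    have h1c3 : 0 < 1 - c3*Δ := lt_of_lt_of_le (Real.exp_pos _) hexp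
    have h1c3' : 1 - c3*Δ ≤ 1 := by linarith
    have hNd : (N:ℝ) * Δ = T := by rw [hΔdef]; field_simp
    have hpowN : Real.exp (-(2*c3*T)) ≤ (1 - c3*Δ)^N := by
      have h1 := pow_le_pow_left₀ (Real.exp_pos (-(2*(c3*Δ)))).le hexp N
      have h2 : Real.exp (-(2*(c3*Δ)))^N = Real.exp (-(2*c3*T)) := by
        rw [← Real.exp_nat_mul]
        congr 1
        rw [← hNd]; ring
      rwa [h2] at h1
    have hpow_n : (1 - c3*Δ)^N ≤ (1 - c3*Δ)^n := pow_le_pow_of_le_one h1c3.le h1c3' hn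
    have hterm : (0:ℝ) ≤ Cρ * Δ * Δ ^ lam := by positivity
    have h1 : |Y ((n:ℝ)*T/(N:ℝ)) - Yh N n| * Real.exp (-(2*c3*T)) ≤ Cρ * T * Δ^lam := by
      calc |Y ((n:ℝ)*T/(N:ℝ)) - Yh N n| * Real.exp (-(2*c3*T))
          ≤ |Y ((n:ℝ)*T/(N:ℝ)) - Yh N n| * (1 - c3*Δ)^N :=
            mul_le_mul_of_nonneg_left hpowN (abs_nonneg _)
        _ ≤ |Y ((n:ℝ)*T/(N:ℝ)) - Yh N n| * (1 - c3*Δ)^n :=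
            mul_le_mul_of_nonneg_left hpow_n (abs_nonneg _)
        _ ≤ (n:ℝ) * (Cρ * Δ * Δ ^ lam) := hk
        _ ≤ (N:ℝ) * (Cρ * Δ * Δ ^ lam) :=
            mul_le_mul_of_nonneg_right (Nat.cast_le.2 hn) hterm
        _ = Cρ * T * Δ^lam := by rw [← hNd]; ring
    have h2 := mul_le_mul_of_nonneg_right h1 (Real.exp_pos (2*c3*T)).le
    rw [mul_assoc, ← Real.exp_add] at h2
    have he0 : -(2*c3*T) + 2*c3*T = 0 := by ring
    rw [he0, Real.exp_zero, mul_one] at h2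
    have h3 : Cρ * T * Δ^lam * Real.exp (2*c3*T) = CE * Δ^lam := by
      rw [hCEdef]; ring
    linarith
  have hr0 : (0:ℝ) ≤ r := le_trans zero_le_one hr
  have hrpos : (0:ℝ) < r := lt_of_lt_of_le one_pos hr
  have hlamr : 0 < lam * r := mul_pos hlam0 hrpos
  set A := CE / (ε0 * (ε0/2)) with hAdef
  have hA : 0 < A := by positivity
  set δ1 := (ε0/(2*CE)) ^ ((1:ℝ)/lam) with hδ1def
  have hδ1 : 0 < δ1 := Real.rpow_pos_of_pos (by positivity) _
  set δ0 := min (1/(2*c3)) δ1 with hδ0def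
  have hδ0 : 0 < δ0 := lt_min (by positivity) hδ1
  have goodfin : ∀ N : ℕ, 0 < N → T/(N:ℝ) ≤ δ0 → ∀ n : ℕ, n ≤ N →
      |1 / (Y ((n:ℝ) * T / (N:ℝ)) - phi ((n:ℝ) * T / (N:ℝ))) -
        1 / (Yh N n - phi ((n:ℝ) * T / (N:ℝ)))| ≤ A * (T/(N:ℝ)) ^ lam ∧
      |1 / (psi ((n:ℝ) * T / (N:ℝ)) - Y ((n:ℝ) * T / (N:ℝ))) -
        1 / (psi ((n:ℝ) * T / (N:ℝ)) - Yh N n)| ≤ A * (T/(N:ℝ)) ^ lam := by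
    intro N hN hδ n hn
    have hNpos : (0:ℝ) < (N:ℝ) := Nat.cast_pos.2 hN
    set Δ := T/(N:ℝ) with hΔdef
    have hΔpos : 0 < Δ := div_pos hT hNpos
    have hhalf : c3 * Δ ≤ 1/2 := by
      have h1 : Δ ≤ 1/(2*c3) := le_trans hδ (min_le_left _ _)
      have h2 : c3 * Δ ≤ c3 * (1/(2*c3)) := mul_le_mul_of_nonneg_left h1 hc3.le
      have h3 : c3 * (1/(2*c3)) = 1/2 := by
        rw [mul_one_div, div_eq_div_iff (by positivity) (by norm_num)]
        ring
      linarith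
    have hEb := good N hN hhalf n hn
    have hΔδ1 : Δ ≤ δ1 := le_trans hδ (min_le_right _ _)
    have hrp : Δ^lam ≤ δ1^lam := Real.rpow_le_rpow hΔpos.le hΔδ1 hlam0.le
    have hδ1lam : δ1^lam = ε0/(2*CE) := by
      have hx : (0:ℝ) ≤ ε0/(2*CE) := by positivity
      rw [hδ1def, ← Real.rpow_mul hx]
      have h1 : (1:ℝ)/lam * lam = 1 := by field_simp
      rw [h1, Real.rpow_one]
    have hE2 : |Y ((n:ℝ)*T/(N:ℝ)) - Yh N n| ≤ ε0/2 := by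
      have h4 : CE * Δ^lam ≤ CE * (ε0/(2*CE)) := by
        rw [← hδ1lam]
        exact mul_le_mul_of_nonneg_left hrp hCE.le
      have h5 : CE * (ε0/(2*CE)) = ε0/2 := by field_simp
      linarith
    have htn := htkmem N hN n hn
    have ha : ε0 ≤ Y ((n:ℝ)*T/(N:ℝ)) - phi ((n:ℝ)*T/(N:ℝ)) := hYlow _ htn
    have ha' : ε0 ≤ psi ((n:ℝ)*T/(N:ℝ)) - Y ((n:ℝ)*T/(N:ℝ)) := hYup _ htn
    have hEle : Y ((n:ℝ)*T/(N:ℝ)) - Yh N n ≤ ε0/2 := le_trans (le_abs_self _) hE2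
    have hEge : -(ε0/2) ≤ Y ((n:ℝ)*T/(N:ℝ)) - Yh N n := (abs_le.mp hE2).1
    have hb1 : ε0/2 ≤ Yh N n - phi ((n:ℝ)*T/(N:ℝ)) := by linarith
    have hb2 : ε0/2 ≤ psi ((n:ℝ)*T/(N:ℝ)) - Yh N n := by linarith
    have hapos : 0 < Y ((n:ℝ)*T/(N:ℝ)) - phi ((n:ℝ)*T/(N:ℝ)) := lt_of_lt_of_le hε0 ha
    have hapos' : 0 < psi ((n:ℝ)*T/(N:ℝ)) - Y ((n:ℝ)*T/(N:ℝ)) := lt_of_lt_of_le hε0 ha'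
    have hbpos1 : 0 < Yh N n - phi ((n:ℝ)*T/(N:ℝ)) := lt_of_lt_of_le (by linarith) hb1
    have hbpos2 : 0 < psi ((n:ℝ)*T/(N:ℝ)) - Yh N n := lt_of_lt_of_le (by linarith) hb2
    have hprod : ε0 * (ε0/2) ≤ (Y ((n:ℝ)*T/(N:ℝ)) - phi ((n:ℝ)*T/(N:ℝ))) * (Yh N n - phi ((n:ℝ)*T/(N:ℝ))) :=
      mul_le_mul ha hb1 (by linarith) (by linarith)
    have hprod' : ε0 * (ε0/2) ≤ (psi ((n:ℝ)*T/(N:ℝ)) - Y ((n:ℝ)*T/(N:ℝ))) * (psi ((n:ℝ)*T/(N:ℝ)) - Yh N n) :=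
      mul_le_mul ha' hb2 (by linarith) (by linarith)
    constructor
    · have hid1 : 1 / (Y ((n:ℝ)*T/(N:ℝ)) - phi ((n:ℝ)*T/(N:ℝ))) - 1 / (Yh N n - phi ((n:ℝ)*T/(N:ℝ)))
          = -(Y ((n:ℝ)*T/(N:ℝ)) - Yh N n) /
            ((Y ((n:ℝ)*T/(N:ℝ)) - phi ((n:ℝ)*T/(N:ℝ))) * (Yh N n - phi ((n:ℝ)*T/(N:ℝ)))) := by
        rw [div_sub_div _ _ hapos.ne' hbpos1.ne']
        congr 1
        ring
      rw [hid1, abs_div, abs_neg, abs_of_pos (mul_pos hapos hbpos1)]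
      calc |Y ((n:ℝ)*T/(N:ℝ)) - Yh N n| /
            ((Y ((n:ℝ)*T/(N:ℝ)) - phi ((n:ℝ)*T/(N:ℝ))) * (Yh N n - phi ((n:ℝ)*T/(N:ℝ))))
          ≤ (CE * Δ^lam) / (ε0 * (ε0/2)) :=
            div_le_div₀ (by positivity) hEb (by positivity) hprod
        _ = A * Δ^lam := by rw [hAdef]; ring
    · have hid2 : 1 / (psi ((n:ℝ)*T/(N:ℝ)) - Y ((n:ℝ)*T/(N:ℝ))) - 1 / (psi ((n:ℝ)*T/(N:ℝ)) - Yh N n)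
          = (Y ((n:ℝ)*T/(N:ℝ)) - Yh N n) /
            ((psi ((n:ℝ)*T/(N:ℝ)) - Y ((n:ℝ)*T/(N:ℝ))) * (psi ((n:ℝ)*T/(N:ℝ)) - Yh N n)) := by
        rw [div_sub_div _ _ hapos'.ne' hbpos2.ne']
        congr 1
        ring
      rw [hid2, abs_div, abs_of_pos (mul_pos hapos' hbpos2)]
      calc |Y ((n:ℝ)*T/(N:ℝ)) - Yh N n| /
            ((psi ((n:ℝ)*T/(N:ℝ)) - Y ((n:ℝ)*T/(N:ℝ))) * (psi ((n:ℝ)*T/(N:ℝ)) - Yh N n))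
          ≤ (CE * Δ^lam) / (ε0 * (ε0/2)) :=
            div_le_div₀ (by positivity) hEb (by positivity) hprod'
        _ = A * Δ^lam := by rw [hAdef]; ring
  -- crude bound for the finitely many coarse grids
  set N0 := Nat.ceil (T/δ0) with hN0def
  set B := 1 + ∑ i ∈ Finset.range (N0+1), ∑ j ∈ Finset.range (N0+1),
      (|1 / (Y ((j:ℝ) * T / (i:ℝ)) - phi ((j:ℝ) * T / (i:ℝ))) -
          1 / (Yh i j - phi ((j:ℝ) * T / (i:ℝ)))| +
        |1 / (psi ((j:ℝ) * T / (i:ℝ)) - Y ((j:ℝ) * T / (i:ℝ))) -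
          1 / (psi ((j:ℝ) * T / (i:ℝ)) - Yh i j)|) with hBdef
  have hsum0 : ∀ i ∈ Finset.range (N0+1),
      (0:ℝ) ≤ ∑ j ∈ Finset.range (N0+1),
      (|1 / (Y ((j:ℝ) * T / (i:ℝ)) - phi ((j:ℝ) * T / (i:ℝ))) -
          1 / (Yh i j - phi ((j:ℝ) * T / (i:ℝ)))| +
        |1 / (psi ((j:ℝ) * T / (i:ℝ)) - Y ((j:ℝ) * T / (i:ℝ))) -
          1 / (psi ((j:ℝ) * T / (i:ℝ)) - Yh i j)|) := by
    intro i _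
    apply Finset.sum_nonneg
    intro j _
    positivity
  have hB1 : 1 ≤ B := by
    rw [hBdef]
    have := Finset.sum_nonneg hsum0
    linarith
  have hBge : ∀ N : ℕ, N ≤ N0 → ∀ n : ℕ, n ≤ N0 →
      |1 / (Y ((n:ℝ) * T / (N:ℝ)) - phi ((n:ℝ) * T / (N:ℝ))) -
          1 / (Yh N n - phi ((n:ℝ) * T / (N:ℝ)))| ≤ B ∧
      |1 / (psi ((n:ℝ) * T / (N:ℝ)) - Y ((n:ℝ) * T / (N:ℝ))) -
          1 / (psi ((n:ℝ) * T / (N:ℝ)) - Yh N n)| ≤ B := by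
    intro N hNle n hnle
    have hmemN : N ∈ Finset.range (N0+1) := Finset.mem_range.2 (Nat.lt_succ_of_le hNle)
    have hmemn : n ∈ Finset.range (N0+1) := Finset.mem_range.2 (Nat.lt_succ_of_le hnle)
    have hinner : (|1 / (Y ((n:ℝ) * T / (N:ℝ)) - phi ((n:ℝ) * T / (N:ℝ))) -
          1 / (Yh N n - phi ((n:ℝ) * T / (N:ℝ)))| +
        |1 / (psi ((n:ℝ) * T / (N:ℝ)) - Y ((n:ℝ) * T / (N:ℝ))) -
          1 / (psi ((n:ℝ) * T / (N:ℝ)) - Yh N n)|)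
        ≤ ∑ j ∈ Finset.range (N0+1),
      (|1 / (Y ((j:ℝ) * T / (N:ℝ)) - phi ((j:ℝ) * T / (N:ℝ))) -
          1 / (Yh N j - phi ((j:ℝ) * T / (N:ℝ)))| +
        |1 / (psi ((j:ℝ) * T / (N:ℝ)) - Y ((j:ℝ) * T / (N:ℝ))) -
          1 / (psi ((j:ℝ) * T / (N:ℝ)) - Yh N j)|) :=
      Finset.single_le_sum (f := fun j : ℕ =>
        |1 / (Y ((j:ℝ) * T / (N:ℝ)) - phi ((j:ℝ) * T / (N:ℝ))) -
            1 / (Yh N j - phi ((j:ℝ) * T / (N:ℝ)))| +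
          |1 / (psi ((j:ℝ) * T / (N:ℝ)) - Y ((j:ℝ) * T / (N:ℝ))) -
            1 / (psi ((j:ℝ) * T / (N:ℝ)) - Yh N j)|) (fun j _ => by positivity) hmemn
    have houter := Finset.single_le_sum (f := fun i : ℕ => ∑ j ∈ Finset.range (N0+1),
      (|1 / (Y ((j:ℝ) * T / (i:ℝ)) - phi ((j:ℝ) * T / (i:ℝ))) -
          1 / (Yh i j - phi ((j:ℝ) * T / (i:ℝ)))| +
        |1 / (psi ((j:ℝ) * T / (i:ℝ)) - Y ((j:ℝ) * T / (i:ℝ))) -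
          1 / (psi ((j:ℝ) * T / (i:ℝ)) - Yh i j)|)) hsum0 hmemN
    have htot : |1 / (Y ((n:ℝ) * T / (N:ℝ)) - phi ((n:ℝ) * T / (N:ℝ))) -
          1 / (Yh N n - phi ((n:ℝ) * T / (N:ℝ)))| +
        |1 / (psi ((n:ℝ) * T / (N:ℝ)) - Y ((n:ℝ) * T / (N:ℝ))) -
          1 / (psi ((n:ℝ) * T / (N:ℝ)) - Yh N n)| ≤ B := by
      rw [hBdef]
      linarith [le_trans hinner houter]
    constructor
    · have h2 := abs_nonneg (1 / (psi ((n:ℝ) * T / (N:ℝ)) - Y ((n:ℝ) * T / (N:ℝ))) -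
          1 / (psi ((n:ℝ) * T / (N:ℝ)) - Yh N n))
      linarith
    · have h2 := abs_nonneg (1 / (Y ((n:ℝ) * T / (N:ℝ)) - phi ((n:ℝ) * T / (N:ℝ))) -
          1 / (Yh N n - phi ((n:ℝ) * T / (N:ℝ))))
      linarith
  have hB0 : (0:ℝ) < B := lt_of_lt_of_le one_pos hB1
  refine ⟨max (A ^ r) (B ^ r / δ0 ^ (lam * r)), ?_, ?_⟩
  · exact lt_of_lt_of_le (Real.rpow_pos_of_pos hA r) (le_max_left _ _)
  · intro N hN hN1 n hn
    have hNpos : (0:ℝ) < (N:ℝ) := Nat.cast_pos.2 hN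
    have hΔpos : (0:ℝ) < T/(N:ℝ) := div_pos hT hNpos
    have hΔ0 : (0:ℝ) ≤ T/(N:ℝ) := hΔpos.le
    have hΔlr0 : (0:ℝ) ≤ (T/(N:ℝ)) ^ (lam*r) := Real.rpow_nonneg hΔ0 _
    by_cases hcase : T/(N:ℝ) ≤ δ0
    · obtain ⟨h1, h2⟩ := goodfin N hN hcase n hn
      have hkey : ∀ x : ℝ, |x| ≤ A * (T/(N:ℝ))^lam →
          |x| ^ r ≤ max (A^r) (B^r/δ0^(lam*r)) * (T/(N:ℝ))^(lam*r) := by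
        intro x hx
        have h4 : |x| ^ r ≤ (A * (T/(N:ℝ))^lam) ^ r :=
          Real.rpow_le_rpow (abs_nonneg x) hx hr0
        have h5 : (A * (T/(N:ℝ))^lam) ^ r = A^r * ((T/(N:ℝ))^lam)^r :=
          Real.mul_rpow hA.le (Real.rpow_nonneg hΔ0 _)
        have h6 : ((T/(N:ℝ))^lam)^r = (T/(N:ℝ))^(lam*r) := (Real.rpow_mul hΔ0 lam r).symm
        have h7 : A^r * (T/(N:ℝ))^(lam*r) ≤ max (A^r) (B^r/δ0^(lam*r)) * (T/(N:ℝ))^(lam*r) :=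
          mul_le_mul_of_nonneg_right (le_max_left _ _) hΔlr0
        calc |x|^r ≤ A^r * (T/(N:ℝ))^(lam*r) := by rw [← h6, ← h5]; exact h4
          _ ≤ _ := h7
      exact ⟨hkey _ h1, hkey _ h2⟩
    · push_neg at hcase
      have hNle : N ≤ N0 := by
        have h1 : δ0 * (N:ℝ) < T := by
          rw [lt_div_iff₀ hNpos] at hcase
          exact hcase
        have h2 : (N:ℝ) < T/δ0 := by
          rw [lt_div_iff₀ hδ0]
          linarith
        have h4 : (N:ℝ) ≤ (N0:ℝ) := le_of_lt (lt_of_lt_of_le h2 (Nat.le_ceil _))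
        exact_mod_cast h4
      obtain ⟨h1, h2⟩ := hBge N hNle n (le_trans hn hNle)
      have hδΔ : δ0 ^ (lam*r) ≤ (T/(N:ℝ)) ^ (lam*r) :=
        Real.rpow_le_rpow hδ0.le hcase.le hlamr.le
      have hCb0 : (0:ℝ) ≤ B^r/δ0^(lam*r) :=
        div_nonneg (Real.rpow_nonneg hB0.le r) (Real.rpow_nonneg hδ0.le _)
      have hkey : ∀ x : ℝ, |x| ≤ B →
          |x| ^ r ≤ max (A^r) (B^r/δ0^(lam*r)) * (T/(N:ℝ))^(lam*r) := by
        intro x hx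
        have h4 : |x|^r ≤ B^r := Real.rpow_le_rpow (abs_nonneg x) hx hr0
        have h5 : B^r = (B^r/δ0^(lam*r)) * δ0^(lam*r) :=
          (div_mul_cancel₀ _ (ne_of_gt (Real.rpow_pos_of_pos hδ0 _))).symm
        have h6 : (B^r/δ0^(lam*r)) * δ0^(lam*r) ≤ (B^r/δ0^(lam*r)) * (T/(N:ℝ))^(lam*r) :=
          mul_le_mul_of_nonneg_left hδΔ hCb0
        have h7 : (B^r/δ0^(lam*r)) * (T/(N:ℝ))^(lam*r)
            ≤ max (A^r) (B^r/δ0^(lam*r)) * (T/(N:ℝ))^(lam*r) :=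
          mul_le_mul_of_nonneg_right (le_max_right _ _) hΔlr0
        calc |x|^r ≤ B^r := h4
          _ = (B^r/δ0^(lam*r)) * δ0^(lam*r) := h5
          _ ≤ (B^r/δ0^(lam*r)) * (T/(N:ℝ))^(lam*r) := h6
          _ ≤ _ := h7
      exact ⟨hkey _ h1, hkey _ h2⟩
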